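/- Let G be a metacyclic group, i.e., G has a normal subgroup N such that both N and G/N are cyclic. Then for every set X and every faithful action of G on X there exists a distinguishing 3-coloring of X. -/
import Mathlib

open Classical in
private noncomputable def mrho {X : Type*} (R RN : X → X) (x : X) : X :=
  if RN x = RN (R x) then R x else RN x

open Classical in
private noncomputable def mcol {G X : Type*} [Group G] (φ : G →* Equiv.Perm X) (a : G)
    (R RN : X → X) (x : X) : Fin 3 :=
  if φ a x = x then (if x = R x then 2 else 0)
  else if x = mrho R RN x then 2
  else if RN x = RN (R x) ∧ x = φ a (mrho R RN x) then 1
  else 0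

private lemma exists_rep' {X : Type*} (r : X → X → Prop) (hrefl : ∀ x, r x x)
    (hsymm : ∀ x y, r x y → r y x) (htrans : ∀ x y z, r x y → r y z → r x z) :
    ∃ R : X → X, (∀ x, r (R x) x) ∧ (∀ x y, r x y → R x = R y) := by
  let s : Setoid X := ⟨r, ⟨hrefl, fun h => hsymm _ _ h, fun h h' => htrans _ _ _ h h'⟩⟩
  refine ⟨fun x => (Quotient.mk s x).out, fun x => ?_, fun x y h => ?_⟩
  · exact Quotient.exact (Quotient.out_eq (Quotient.mk s x))
  · have hxy : Quotient.mk s x = Quotient.mk s y := Quotient.sound h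
    simp only [hxy]

/-- If `G` is metacyclic, i.e. it has a normal subgroup `N` with both `N` and `G/N` cyclic,
then every faithful action of `G` on any set `X` admits a distinguishing `3`-coloring.
Faithful actions are encoded as injective homomorphisms into the permutation group. -/
theorem distinguishing_of_metacyclic {G : Type*} [Group G] (N : Subgroup G) [N.Normal]
    (hN : IsCyclic N) (hQ : IsCyclic (G ⧸ N)) :
    ∀ (X : Type*) (φ : G →* Equiv.Perm X), Function.Injective φ →
      ∃ col : X → Fin 3, ∀ g : G, (∀ x : X, col (φ g x) = col x) → g = 1 := by
  classical
  intro X φ hφ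
  have hnormal : N.Normal := inferInstance
  -- basic action lemmas
  have happ : ∀ (p q : G) (x : X), φ (p * q) x = φ p (φ q x) := by
    intro p q x; rw [map_mul]; rfl
  have hone : ∀ x : X, φ 1 x = x := by intro x; simp
  have hinv : ∀ (p : G) (x : X), φ p⁻¹ (φ p x) = x := by
    intro p x; rw [← happ]; simp
  have hzfix : ∀ (p : G) (x : X), φ p x = x → ∀ k : ℤ, φ (p ^ k) x = x := by
    intro p x hp k
    have h1 : φ p ∈ MulAction.stabilizer (Equiv.Perm X) x := by
      simpa [MulAction.mem_stabilizer_iff, Equiv.Perm.smul_def] using hp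
    have h2 := Subgroup.zpow_mem _ h1 k
    rw [map_zpow]
    simpa [MulAction.mem_stabilizer_iff, Equiv.Perm.smul_def] using h2
  -- generator of N
  obtain ⟨a0, ha0⟩ := hN.exists_generator
  set a : G := (a0 : G) with ha_def
  have haN : a ∈ N := a0.2
  have hNgen : ∀ n ∈ N, ∃ k : ℤ, a ^ k = n := by
    intro n hn
    obtain ⟨k, hk⟩ := ha0 ⟨n, hn⟩
    refine ⟨k, ?_⟩
    have := congrArg (Subtype.val) hk
    simpa using this
  have hNfix : ∀ n ∈ N, ∀ x : X, φ a x = x → φ n x = x := by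
    intro n hn x hx
    obtain ⟨k, hk⟩ := hNgen n hn
    rw [← hk]; exact hzfix a x hx k
  -- commutativity of the quotient
  obtain ⟨c, hc⟩ := hQ.exists_generator
  have hQcomm : ∀ p q : G ⧸ N, p * q = q * p := by
    intro p q
    obtain ⟨i, hi⟩ := hc p
    obtain ⟨j, hj⟩ := hc q
    rw [← hi, ← hj, ← zpow_add, ← zpow_add, add_comm]
  have hcomm : ∀ p q : G, ∃ n, n ∈ N ∧ q⁻¹ * p * q = p * n := by
    intro p q
    refine ⟨p⁻¹ * (q⁻¹ * p * q), ?_, by group⟩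
    rw [← QuotientGroup.eq_one_iff]
    simp only [QuotientGroup.mk_mul, QuotientGroup.mk_inv]
    rw [mul_assoc ((q : G) : G ⧸ N)⁻¹, hQcomm ((p : G) : G ⧸ N) ((q : G) : G ⧸ N)]
    group
  -- conjugation acts on N as a power map
  have hconjpow : ∀ h : G, ∃ t : ℤ, ∀ n ∈ N, h⁻¹ * n * h = n ^ t := by
    intro h
    have hmem : h⁻¹ * a * h ∈ N := by
      have := hnormal.conj_mem a haN h⁻¹
      simpa using this
    obtain ⟨t, ht⟩ := hNgen (h⁻¹ * a * h) hmem
    refine ⟨t, ?_⟩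
    intro n hn
    obtain ⟨k, hk⟩ := hNgen n hn
    rw [← hk]
    have h1 : h⁻¹ * (a ^ k * h) = (h⁻¹ * (a * h)) ^ k := by
      have := map_zpow (MulAut.conj h⁻¹) a k
      simpa [MulAut.conj_apply, mul_assoc] using this
    calc h⁻¹ * a ^ k * h = (h⁻¹ * (a * h)) ^ k := by rw [mul_assoc]; exact h1
      _ = (h⁻¹ * a * h) ^ k := by rw [mul_assoc]
      _ = (a ^ t) ^ k := by rw [← ht]
      _ = (a ^ k) ^ t := by rw [← zpow_mul, ← zpow_mul, mul_comm]
  -- fixed points of a are invariant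
  have hfixinv : ∀ (h : G) (x : X), φ a x = x → φ a (φ h x) = φ h x := by
    intro h x hx
    obtain ⟨t, ht⟩ := hconjpow h
    have h2 : a * h = h * a ^ t := by
      have h3 := ht a haN
      calc a * h = h * (h⁻¹ * a * h) := by group
        _ = h * a ^ t := by rw [h3]
    rw [← happ, h2, happ, hzfix a x hx t]
  have hbiginv : ∀ (h : G) (x : X), φ a x ≠ x → φ a (φ h x) ≠ φ h x := by
    intro h x hx hcon
    apply hx
    have := hfixinv h⁻¹ (φ h x) hcon
    rwa [hinv] at this
  -- orbit representatives
  obtain ⟨R, hR1, hR2⟩ := exists_rep' (fun x y : X => ∃ p : G, φ p x = y)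
    (fun x => ⟨1, hone x⟩)
    (fun x y h => by obtain ⟨p, hp⟩ := h; exact ⟨p⁻¹, by rw [← hp, hinv]⟩)
    (fun x y z h h' => by
      obtain ⟨p, hp⟩ := h; obtain ⟨q, hq⟩ := h'
      exact ⟨q * p, by rw [happ, hp, hq]⟩)
  obtain ⟨RN, hRN1, hRN2⟩ := exists_rep' (fun x y : X => ∃ n, n ∈ N ∧ φ n x = y)
    (fun x => ⟨1, one_mem N, hone x⟩)
    (fun x y h => by
      obtain ⟨n, hn, hp⟩ := h
      exact ⟨n⁻¹, inv_mem hn, by rw [← hp, hinv]⟩)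
    (fun x y z h h' => by
      obtain ⟨n, hn, hp⟩ := h; obtain ⟨n', hn', hq⟩ := h'
      exact ⟨n' * n, mul_mem hn' hn, by rw [happ, hp, hq]⟩)
  have hRinv : ∀ (p : G) (x : X), R (φ p x) = R x := fun p x => (hR2 x (φ p x) ⟨p, rfl⟩).symm
  have hRidem : ∀ x : X, R (R x) = R x := fun x => hR2 (R x) x (hR1 x)
  have hRNeq : ∀ x y : X, RN x = RN y → ∃ n, n ∈ N ∧ φ n x = y := by
    intro x y h
    obtain ⟨n1, hn1, e1⟩ := hRN1 x
    obtain ⟨n2, hn2, e2⟩ := hRN1 y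
    refine ⟨n2 * n1⁻¹, mul_mem hn2 (inv_mem hn1), ?_⟩
    have e1' : φ n1⁻¹ x = RN x := by
      conv_lhs => rw [← e1]
      exact hinv n1 (RN x)
    rw [happ n2 n1⁻¹ x, e1', h]
    exact e2
  -- properties of mrho
  have hρorbN : ∀ x : X, ∃ n, n ∈ N ∧ φ n (mrho R RN x) = x := by
    intro x
    unfold mrho
    split_ifs with h
    · exact hRNeq (R x) x h.symm
    · exact hRN1 x
  have hρconst : ∀ x y : X, (∃ n, n ∈ N ∧ φ n x = y) → mrho R RN x = mrho R RN y := by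
    intro x y h
    obtain ⟨n, hn, e⟩ := h
    have e1 : RN x = RN y := hRN2 x y ⟨n, hn, e⟩
    have e2 : R x = R y := hR2 x y ⟨n, e⟩
    unfold mrho
    rw [e1, e2]
  have hρidem : ∀ x : X, mrho R RN (mrho R RN x) = mrho R RN x :=
    fun x => hρconst (mrho R RN x) x (hρorbN x)
  have hρR : ∀ x : X, mrho R RN (R x) = R x := by
    intro x
    unfold mrho
    rw [hRidem x, if_pos rfl]
  -- the coloring
  refine ⟨mcol φ a R RN, ?_⟩
  intro g hg
  -- Step C : g fixes all points fixed by a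
  have hfix_s : ∀ x : X, φ a x = x → φ g x = x := by
    intro x hx
    obtain ⟨p, hp⟩ := hR1 x
    have hr_fix : φ a (R x) = R x := by
      by_contra hne
      have := hbiginv p (R x) hne
      rw [hp] at this
      exact this hx
    have hcol_r : mcol φ a R RN (R x) = 2 := by
      unfold mcol
      rw [if_pos hr_fix, if_pos (hRidem x).symm]
    have hgr := hg (R x)
    rw [hcol_r] at hgr
    have hfix_gr : φ a (φ g (R x)) = φ g (R x) := hfixinv g (R x) hr_fix
    have h3 : φ g (R x) = R x := by
      unfold mcol at hgr
      rw [if_pos hfix_gr] at hgr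
      by_cases hne : φ g (R x) = R (φ g (R x))
      · rw [hRinv g (R x), hRidem] at hne; exact hne
      · rw [if_neg hne] at hgr; exact absurd hgr (by decide)
    obtain ⟨n, hnN, hn⟩ := hcomm g p
    have hn' : g * p = p * (g * n) := by
      rw [← hn]; group
    rw [← hp, ← happ g p, hn', happ p (g * n), happ g n,
      hNfix n hnN _ hr_fix, h3]
  -- key1 : g fixes the second mark of special orbits
  have key1 : ∀ x : X, φ a x ≠ x → φ g (φ a (R x)) = φ a (R x) := by
    intro x hx
    obtain ⟨p, hp⟩ := hR1 x
    have hm_big : φ a (R x) ≠ R x := by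
      intro h
      apply hx
      rw [← hp]; exact hfixinv p _ h
    have ham_big : φ a (φ a (R x)) ≠ φ a (R x) := hbiginv a (R x) hm_big
    have hρam : mrho R RN (φ a (R x)) = R x := by
      have h1 : mrho R RN (R x) = mrho R RN (φ a (R x)) :=
        hρconst (R x) (φ a (R x)) ⟨a, haN, rfl⟩
      rw [← h1, hρR]
    have hcolam : mcol φ a R RN (φ a (R x)) = 1 := by
      unfold mcol
      rw [if_neg ham_big, hρam, if_neg hm_big]
      have hc1 : RN (φ a (R x)) = RN (R (φ a (R x))) := by
        rw [hRinv a (R x), hRidem]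
        exact hRN2 (φ a (R x)) (R x) ⟨a⁻¹, inv_mem haN, hinv a (R x)⟩
      rw [if_pos ⟨hc1, rfl⟩]
    have hgam := hg (φ a (R x))
    rw [hcolam] at hgam
    set y := φ g (φ a (R x)) with hy
    have hy_big : φ a y ≠ y := hbiginv g _ ham_big
    unfold mcol at hgam
    rw [if_neg hy_big] at hgam
    by_cases h1 : y = mrho R RN y
    · rw [if_pos h1] at hgam; exact absurd hgam (by decide)
    · rw [if_neg h1] at hgam
      by_cases h2 : RN y = RN (R y) ∧ y = φ a (mrho R RN y)
      · obtain ⟨hC, hD⟩ := h2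
        have hRy : R y = R x := by
          rw [hy, hRinv g (φ a (R x)), hRinv a (R x), hRidem]
        have hrel : mrho R RN y = R x := by
          unfold mrho
          rw [if_pos hC, hRy]
        rw [hrel] at hD
        exact hD
      · rw [if_neg h2] at hgam; exact absurd hgam (by decide)
  -- key2 : g moves big points within their N-orbit
  have key2 : ∀ x : X, φ a x ≠ x → ∃ n, n ∈ N ∧ φ g x = φ n x := by
    intro x hx
    obtain ⟨p, hp⟩ := hR1 x
    set n0 : G := g * a⁻¹ * g⁻¹ * a with hn0def
    have hgm : φ g (R x) = φ n0 (R x) := by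
      have e1 : g = g * a⁻¹ * g⁻¹ * (g * a) := by group
      calc φ g (R x) = φ (g * a⁻¹ * g⁻¹ * (g * a)) (R x) := by rw [← e1]
        _ = φ (g * a⁻¹ * g⁻¹) (φ (g * a) (R x)) := by rw [happ (g * a⁻¹ * g⁻¹) (g * a)]
        _ = φ (g * a⁻¹ * g⁻¹) (φ g (φ a (R x))) := by rw [happ g a]
        _ = φ (g * a⁻¹ * g⁻¹) (φ a (R x)) := by rw [key1 x hx]
        _ = φ n0 (R x) := by rw [happ (g * a⁻¹ * g⁻¹) a]
    have hn0N : n0 ∈ N := by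
      refine mul_mem ?_ haN
      have := hnormal.conj_mem a⁻¹ (inv_mem haN) g
      simpa [mul_assoc] using this
    obtain ⟨n1, hn1N, hn1⟩ := hcomm g p
    have hmemn : p * (g * n1 * g⁻¹ * n0) * p⁻¹ ∈ N := by
      apply hnormal.conj_mem
      exact mul_mem (hnormal.conj_mem n1 hn1N g) hn0N
    refine ⟨p * (g * n1 * g⁻¹ * n0) * p⁻¹, hmemn, ?_⟩
    have hpR : φ p⁻¹ x = R x := by
      conv_lhs => rw [← hp]
      exact hinv p (R x)
    calc φ g x = φ g (φ p (R x)) := by rw [hp]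
      _ = φ (g * p) (R x) := (happ g p _).symm
      _ = φ (p * (g * n1)) (R x) := by
            rw [show g * p = p * (g * n1) from by rw [← hn1]; group]
      _ = φ p (φ (g * n1) (R x)) := happ p (g * n1) _
      _ = φ p (φ (g * n1 * g⁻¹ * g) (R x)) := by rw [show g * n1 * g⁻¹ * g = g * n1 from by group]
      _ = φ p (φ (g * n1 * g⁻¹) (φ g (R x))) := by rw [happ (g * n1 * g⁻¹) g]
      _ = φ p (φ (g * n1 * g⁻¹) (φ n0 (R x))) := by rw [hgm]
      _ = φ p (φ (g * n1 * g⁻¹ * n0) (R x)) := by rw [happ (g * n1 * g⁻¹) n0]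
      _ = φ (p * (g * n1 * g⁻¹ * n0)) (R x) := (happ p (g * n1 * g⁻¹ * n0) _).symm
      _ = φ (p * (g * n1 * g⁻¹ * n0)) (φ p⁻¹ x) := by rw [hpR]
      _ = φ (p * (g * n1 * g⁻¹ * n0) * p⁻¹) x := (happ (p * (g * n1 * g⁻¹ * n0)) p⁻¹ x).symm
  -- key3 : g fixes the N-orbit representative of every big point
  have key3 : ∀ x : X, φ a x ≠ x → φ g (mrho R RN x) = mrho R RN x := by
    intro x hx
    obtain ⟨n, hnN, hn⟩ := hρorbN x
    have hp_big : φ a (mrho R RN x) ≠ mrho R RN x := by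
      intro h
      apply hx
      rw [← hn]
      exact hfixinv n _ h
    have hcolp : mcol φ a R RN (mrho R RN x) = 2 := by
      unfold mcol
      rw [if_neg hp_big, if_pos (hρidem x).symm]
    have hgp := hg (mrho R RN x)
    rw [hcolp] at hgp
    have hg_big : φ a (φ g (mrho R RN x)) ≠ φ g (mrho R RN x) := hbiginv g _ hp_big
    obtain ⟨n2, hn2N, hn2⟩ := key2 (mrho R RN x) hp_big
    have hρgp : mrho R RN (φ g (mrho R RN x)) = mrho R RN x := by
      have h1 : mrho R RN (mrho R RN x) = mrho R RN (φ g (mrho R RN x)) :=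
        hρconst _ _ ⟨n2, hn2N, hn2.symm⟩
      rw [← h1, hρidem]
    unfold mcol at hgp
    rw [if_neg hg_big] at hgp
    by_cases h1 : φ g (mrho R RN x) = mrho R RN (φ g (mrho R RN x))
    · rw [hρgp] at h1; exact h1
    · rw [if_neg h1] at hgp
      split_ifs at hgp <;> exact absurd hgp (by decide)
  -- the commutator of g and a is trivial
  have huN : a⁻¹ * (g * a * g⁻¹) ∈ N :=
    mul_mem (inv_mem haN) (hnormal.conj_mem a haN g)
  have hufix : ∀ x : X, φ (a⁻¹ * (g * a * g⁻¹)) x = x := by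
    intro x
    by_cases hx : φ a x = x
    · exact hNfix _ huN x hx
    · obtain ⟨p, hp⟩ := hR1 x
      have hm_big : φ a (R x) ≠ R x := by
        intro h; apply hx; rw [← hp]; exact hfixinv p _ h
      have hgm : φ g (R x) = R x := by
        have := key3 (R x) hm_big
        rwa [hρR] at this
      have hg'm : φ g⁻¹ (R x) = R x := by
        conv_lhs => rw [← hgm]
        exact hinv g (R x)
      have hum : φ (a⁻¹ * (g * a * g⁻¹)) (R x) = R x := by
        rw [happ a⁻¹ (g * a * g⁻¹), happ (g * a) g⁻¹, happ g a, hg'm, key1 x hx,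
          hinv a (R x)]
      obtain ⟨t, ht⟩ := hconjpow p
      have hconj : p⁻¹ * (a⁻¹ * (g * a * g⁻¹)) * p = (a⁻¹ * (g * a * g⁻¹)) ^ t := ht _ huN
      calc φ (a⁻¹ * (g * a * g⁻¹)) x
          = φ (a⁻¹ * (g * a * g⁻¹)) (φ p (R x)) := by rw [hp]
        _ = φ (a⁻¹ * (g * a * g⁻¹) * p) (R x) := (happ _ p _).symm
        _ = φ (p * (p⁻¹ * (a⁻¹ * (g * a * g⁻¹)) * p)) (R x) := by
              rw [show a⁻¹ * (g * a * g⁻¹) * p = p * (p⁻¹ * (a⁻¹ * (g * a * g⁻¹)) * p) from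
                by group]
        _ = φ p (φ (p⁻¹ * (a⁻¹ * (g * a * g⁻¹)) * p) (R x)) :=
              happ p (p⁻¹ * (a⁻¹ * (g * a * g⁻¹)) * p) _
        _ = φ p (φ ((a⁻¹ * (g * a * g⁻¹)) ^ t) (R x)) := by rw [hconj]
        _ = φ p (R x) := by rw [hzfix _ _ hum t]
        _ = x := hp
  have hu1 : a⁻¹ * (g * a * g⁻¹) = 1 := by
    apply hφ
    rw [map_one]
    exact Equiv.ext fun x => by rw [hufix x]; rfl
  have hga : g * a = a * g := by
    have h2 : a = g * a * g⁻¹ := by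
      rwa [inv_mul_eq_one] at hu1
    calc g * a = g * a * g⁻¹ * g := by group
      _ = a * g := by rw [← h2]
  have hgN : ∀ n, n ∈ N → g * n = n * g := by
    intro n hn
    obtain ⟨k, hk⟩ := hNgen n hn
    rw [← hk]
    exact Commute.zpow_right hga k
  -- conclusion
  have hfinal : ∀ x : X, φ g x = x := by
    intro x
    by_cases hx : φ a x = x
    · exact hfix_s x hx
    · obtain ⟨n, hn, hnp⟩ := hρorbN x
      have h3 := key3 x hx
      calc φ g x = φ g (φ n (mrho R RN x)) := by rw [hnp]
        _ = φ (g * n) (mrho R RN x) := (happ g n _).symm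
        _ = φ (n * g) (mrho R RN x) := by rw [hgN n hn]
        _ = φ n (φ g (mrho R RN x)) := happ n g _
        _ = φ n (mrho R RN x) := by rw [h3]
        _ = x := hnp
  apply hφ
  rw [map_one]
  exact Equiv.ext fun x => by rw [hfinal x]; rfl
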